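/- Let u be a finite sequence of natural numbers, [u] = {f ∈ ℕ → ℕ : u is a prefix of f} the corresponding cylinder, and K a compact subset of the Baire space. Set A = [u] × {U ∈ Opens(ℕ → ℕ) : K ⊆ U} and G = ((ℕ → ℕ) \ [u]) ∪ ([u] \ K). Then G is a dense open subset of the Baire space, and for every f ∈ G: (f, (ℕ → ℕ) \ {f}) ∈ A if and only if (f, ℕ → ℕ) ∈ A. More precisely, for f ∉ [u] neither pair belongs to A, and for f ∈ [u] \ K both pairs belong to A. -/
import Mathlib


open Topology TopologicalSpace

/-- Given a finite sequence `u`, the cylinder `[u]`, a compact `K`, the basic open set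
`A = [u] × {U ∈ Opens(ℕ → ℕ) : K ⊆ U}` and `G = [u]ᶜ ∪ ([u] \ K)`: `G` is dense open, for
every `f ∈ G` we have `(f, (ℕ → ℕ) \ {f}) ∈ A ↔ (f, ℕ → ℕ) ∈ A`; more precisely for
`f ∉ [u]` neither pair is in `A` and for `f ∈ [u] \ K` both pairs are in `A`. -/
theorem stmt2 (u : List ℕ) (K : Set (ℕ → ℕ)) (hK : IsCompact K) :
    let cyl : Set (ℕ → ℕ) := {f | ∀ i < u.length, f i = u.getD i 0}
    let A : Set ((ℕ → ℕ) × Opens (ℕ → ℕ)) :=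
      cyl ×ˢ {U : Opens (ℕ → ℕ) | K ⊆ (U : Set (ℕ → ℕ))}
    let G : Set (ℕ → ℕ) := cylᶜ ∪ (cyl \ K)
    IsOpen G ∧ Dense G ∧
      (∀ f ∈ G,
        ((f, (⟨{f}ᶜ, isOpen_compl_singleton⟩ : Opens (ℕ → ℕ))) ∈ A ↔
          (f, (⊤ : Opens (ℕ → ℕ))) ∈ A)) ∧
      (∀ f ∉ cyl,
        (f, (⟨{f}ᶜ, isOpen_compl_singleton⟩ : Opens (ℕ → ℕ))) ∉ A ∧
          (f, (⊤ : Opens (ℕ → ℕ))) ∉ A) ∧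
      (∀ f ∈ cyl \ K,
        (f, (⟨{f}ᶜ, isOpen_compl_singleton⟩ : Opens (ℕ → ℕ))) ∈ A ∧
          (f, (⊤ : Opens (ℕ → ℕ))) ∈ A) := by

  intro cyl A G
  have hcyl : IsClosed cyl := by
    have : cyl = ⋂ i ∈ Set.Iio u.length, {f : ℕ → ℕ | f i = u.getD i 0} := by
      ext f; simp [cyl, Set.mem_iInter]
    rw [this]
    exact isClosed_biInter fun i _ => isClosed_eq (continuous_apply i) continuous_const
  have hGeq : G = (cyl ∩ K)ᶜ := by
    simp only [G, Set.compl_inter, Set.diff_eq]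
    rw [Set.union_inter_distrib_left]
    simp [Set.compl_union_self]
  have hmemG : ∀ f, f ∉ K → f ∈ G := by
    intro f hf
    by_cases h : f ∈ cyl
    · exact Or.inr ⟨h, hf⟩
    · exact Or.inl h
  refine ⟨?_, ?_, ?_, ?_, ?_⟩
  · rw [hGeq]
    exact (hcyl.inter hK.isClosed).isOpen_compl
  · -- density
    rw [dense_iff_inter_open]
    intro O hO ⟨f, hf⟩
    obtain ⟨I, v, hv, hsub⟩ := isOpen_pi_iff.mp hO f hf
    set n : ℕ := (I.sup id) + 1 with hn
    have hnI : n ∉ I := by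
      intro h
      have := Finset.le_sup (f := id) h
      simp only [id] at this
      omega
    have hfin : (Function.eval n '' K).Finite := (hK.image (continuous_apply n)).finite_of_discrete
    obtain ⟨M, hM⟩ := hfin.bddAbove
    set g : ℕ → ℕ := Function.update f n (M + 1) with hg
    refine ⟨g, hsub ?_, hmemG g ?_⟩
    · intro i hi
      have : i ≠ n := fun h => hnI (h ▸ hi)
      simp [hg, Function.update_of_ne this]
      exact (hv i hi).2
    · intro hgK
      have : g n ∈ Function.eval n '' K := ⟨g, hgK, rfl⟩
      have := hM this
      simp [hg] at this
  · intro f hf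
    rcases hf with hf | hf
    · have h := fun (V : Opens (ℕ → ℕ)) => fun (h : (f, V) ∈ A) => hf h.1
      exact ⟨fun h' => absurd h' (fun h'' => hf h''.1), fun h' => absurd h' (fun h'' => hf h''.1)⟩
    · constructor
      · intro _
        exact ⟨hf.1, Set.subset_univ K⟩
      · intro _
        exact ⟨hf.1, fun x hx => fun (hxf : x = f) => hf.2 (hxf ▸ hx)⟩
  · intro f hf
    exact ⟨fun h => hf h.1, fun h => hf h.1⟩
  · intro f hf
    exact ⟨⟨hf.1, fun x hx hxf => hf.2 (hxf ▸ hx)⟩, ⟨hf.1, Set.subset_univ K⟩⟩
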